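/- Let H, E be Hilbert spaces and G : H → E a compact linear operator. Define Γ : L²(0,T;H) → C([0,T];E) by (Γφ)(t) = ∫₀^t G φ(s) ds. If φ_n ⇀ φ weakly in L²(0,T;H) with sup_n ‖φ_n‖_{L²} < ∞, then Γφ_n → Γφ strongly in C([0,T];E). -/

import Mathlib

open MeasureTheory Filter

section AuxLemmas

variable {H E : Type*}
    [NormedAddCommGroup H] [InnerProductSpace ℝ H] [CompleteSpace H]
    [NormedAddCommGroup E] [NormedSpace ℝ E]

/-- Cauchy–Schwarz: the `L¹`-norm on a subinterval is bounded by
`√(length) * √(L² bound)`. -/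
lemma stmt9_aux_l1 (T : ℝ) (ψ : ℝ → H) (Mψ : ℝ)
    (hmem : MemLp ψ 2 (volume.restrict (Set.Ioc 0 T)))
    (hb : (∫ t in Set.Ioc 0 T, ‖ψ t‖ ^ 2) ≤ Mψ)
    {a b : ℝ} (h0a : 0 ≤ a) (hab : a ≤ b) (hbT : b ≤ T) :
    (∫ s in Set.Ioc a b, ‖ψ s‖) ≤ Real.sqrt (b - a) * Real.sqrt Mψ := by
  have hsub : Set.Ioc a b ⊆ Set.Ioc 0 T := Set.Ioc_subset_Ioc h0a hbT
  have hmono : volume.restrict (Set.Ioc a b) ≤ volume.restrict (Set.Ioc 0 T) :=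
    Measure.restrict_mono hsub le_rfl
  have hmem' : MemLp ψ 2 (volume.restrict (Set.Ioc a b)) := hmem.mono_measure hmono
  haveI hfin : IsFiniteMeasure (volume.restrict (Set.Ioc a b)) :=
    ⟨by rw [Measure.restrict_apply_univ, Real.volume_Ioc]; exact ENNReal.ofReal_lt_top⟩
  have hpq : Real.HolderConjugate 2 2 := Real.HolderConjugate.two_two
  have key := integral_mul_le_Lp_mul_Lq_of_nonneg (μ := volume.restrict (Set.Ioc a b)) hpq
      (f := fun s => ‖ψ s‖) (g := fun _ => (1 : ℝ))
      (Filter.Eventually.of_forall fun s => norm_nonneg _)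
      (Filter.Eventually.of_forall fun _ => zero_le_one)
      (by rw [ENNReal.ofReal_ofNat]; exact hmem'.norm)
      (by rw [ENNReal.ofReal_ofNat]; exact memLp_const 1)
  simp only [mul_one, Real.rpow_two, one_pow] at key
  have hone : (∫ _ in Set.Ioc a b, (1 : ℝ)) = b - a := by
    simp [Real.volume_Ioc, ENNReal.toReal_ofReal (sub_nonneg.2 hab), hab]
  rw [hone] at key
  have hsq : (∫ s in Set.Ioc a b, ‖ψ s‖ ^ 2) ≤ Mψ := by
    refine le_trans ?_ hb
    refine setIntegral_mono_set ?_ (Filter.Eventually.of_forall fun s => by positivity)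
      (HasSubset.Subset.eventuallyLE hsub)
    have := hmem.integrable_norm_rpow two_ne_zero ENNReal.ofNat_ne_top
    simpa [ENNReal.toReal_ofNat, Real.rpow_two, IntegrableOn] using this
  calc (∫ s in Set.Ioc a b, ‖ψ s‖)
      ≤ (∫ s in Set.Ioc a b, ‖ψ s‖ ^ 2) ^ (1 / (2:ℝ)) * (b - a) ^ (1 / (2:ℝ)) := key
    _ = Real.sqrt (∫ s in Set.Ioc a b, ‖ψ s‖ ^ 2) * Real.sqrt (b - a) := by
        rw [Real.sqrt_eq_rpow, Real.sqrt_eq_rpow]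
    _ ≤ Real.sqrt Mψ * Real.sqrt (b - a) :=
        mul_le_mul_of_nonneg_right (Real.sqrt_le_sqrt hsq) (Real.sqrt_nonneg _)
    _ = Real.sqrt (b - a) * Real.sqrt Mψ := mul_comm _ _

/-- Norm bound for the integral of `G ∘ ψ` over a subinterval. -/
lemma stmt9_aux_bound (G : H →L[ℝ] E) (T : ℝ) (ψ : ℝ → H) (Mψ : ℝ)
    (hmem : MemLp ψ 2 (volume.restrict (Set.Ioc 0 T)))
    (hb : (∫ t in Set.Ioc 0 T, ‖ψ t‖ ^ 2) ≤ Mψ)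
    {a b : ℝ} (h0a : 0 ≤ a) (hab : a ≤ b) (hbT : b ≤ T) :
    ‖∫ s in Set.Ioc a b, G (ψ s)‖ ≤ ‖G‖ * (Real.sqrt (b - a) * Real.sqrt Mψ) := by
  haveI hfinT : IsFiniteMeasure (volume.restrict (Set.Ioc (0:ℝ) T)) :=
    ⟨by rw [Measure.restrict_apply_univ, Real.volume_Ioc]; exact ENNReal.ofReal_lt_top⟩
  have hsub : Set.Ioc a b ⊆ Set.Ioc 0 T := Set.Ioc_subset_Ioc h0a hbT
  have hint0 : IntegrableOn ψ (Set.Ioc 0 T) volume := hmem.integrable one_le_two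
  have hint : IntegrableOn ψ (Set.Ioc a b) volume := hint0.mono_set hsub
  calc ‖∫ s in Set.Ioc a b, G (ψ s)‖
      ≤ ∫ s in Set.Ioc a b, ‖G (ψ s)‖ := norm_integral_le_integral_norm _
    _ ≤ ∫ s in Set.Ioc a b, ‖G‖ * ‖ψ s‖ := by
        refine integral_mono_of_nonneg (Filter.Eventually.of_forall fun s => norm_nonneg _)
          (hint.norm.const_mul _) (Filter.Eventually.of_forall fun s => G.le_opNorm (ψ s))
    _ = ‖G‖ * ∫ s in Set.Ioc a b, ‖ψ s‖ := integral_const_mul _ _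
    _ ≤ ‖G‖ * (Real.sqrt (b - a) * Real.sqrt Mψ) := by
        gcongr
        exact stmt9_aux_l1 T ψ Mψ hmem hb h0a hab hbT

/-- A compact operator maps bounded weakly convergent sequences to strongly
convergent sequences. -/
lemma stmt9_aux_compact (G : H →L[ℝ] E) (hG : IsCompactOperator G)
    (x : ℕ → H) (y : H) (R : ℝ) (hR : ∀ n, ‖x n‖ ≤ R)
    (hw : ∀ h : H, Filter.Tendsto (fun n => (inner ℝ (x n) h : ℝ))
      Filter.atTop (nhds (inner ℝ y h))) :
    Filter.Tendsto (fun n => G (x n)) Filter.atTop (nhds (G y)) := by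
  obtain ⟨K, hK, hGK⟩ := hG
  obtain ⟨r, hr, hball⟩ := Metric.mem_nhds_iff.mp hGK
  have hR0 : 0 ≤ R := le_trans (norm_nonneg _) (hR 0)
  set c : ℝ := 2 * (R + 1) / r with hc
  have hc0 : 0 < c := by positivity
  have hmem : ∀ n, G (x n) ∈ (fun v => c • v) '' K := by
    intro n
    have h1 : c⁻¹ • x n ∈ Metric.ball (0 : H) r := by
      rw [Metric.mem_ball, dist_zero_right, norm_smul, norm_inv, Real.norm_of_nonneg hc0.le]
      have hinv : c⁻¹ = r / (2 * (R + 1)) := by rw [hc, inv_div]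
      calc c⁻¹ * ‖x n‖ ≤ c⁻¹ * R := by gcongr; exact hR n
        _ < r := by
            rw [hinv, div_mul_eq_mul_div, div_lt_iff₀ (by positivity)]
            nlinarith
    have h2 : G (c⁻¹ • x n) ∈ K := hball h1
    exact ⟨G (c⁻¹ • x n), h2, by simp only [← G.map_smul, smul_inv_smul₀ hc0.ne']⟩
  have hK' : IsCompact ((fun v => c • v) '' K) := hK.image (continuous_const_smul c)
  apply tendsto_of_subseq_tendsto
  intro ns hns
  obtain ⟨A, -, φs, hφs, hconv⟩ :=
    hK'.tendsto_subseq (x := fun k => G (x (ns k))) (fun k => hmem (ns k))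
  have hAy : A = G y := by
    apply (NormedSpace.eq_iff_forall_dual_eq ℝ).mpr
    intro ℓ
    set z : H := (InnerProductSpace.toDual ℝ H).symm (ℓ.comp G) with hz
    have hzv : ∀ v : H, (inner ℝ v z : ℝ) = ℓ (G v) := by
      intro v
      rw [real_inner_comm]
      exact InnerProductSpace.toDual_symm_apply
    have h1 : Filter.Tendsto (fun n => ℓ (G (x n))) Filter.atTop (nhds (ℓ (G y))) := by
      have h0 := hw z
      rw [show (fun n => (inner ℝ (x n) z : ℝ)) = fun n => ℓ (G (x n))
          from funext fun n => hzv (x n), hzv y] at h0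
      exact h0
    have h2 : Filter.Tendsto (fun k => ℓ (G (x (ns (φs k))))) Filter.atTop (nhds (ℓ (G y))) :=
      h1.comp (hns.comp hφs.tendsto_atTop)
    have h3 : Filter.Tendsto (fun k => ℓ (G (x (ns (φs k))))) Filter.atTop (nhds (ℓ A)) :=
      (ℓ.continuous.tendsto A).comp hconv
    exact tendsto_nhds_unique h3 h2
  exact ⟨φs, hAy ▸ hconv⟩

end AuxLemmas

/-- Compactness of the integrated control operator `Γφ(t) = ∫₀ᵗ Gφ(s) ds`:
if `G` is a compact operator and `φₙ ⇀ φ` weakly in `L²(0,T;H)` with bounded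
norms, then `Γφₙ → Γφ` uniformly on `[0,T]` in `E`. -/
theorem stmt9 {H E : Type*}
    [NormedAddCommGroup H] [InnerProductSpace ℝ H] [CompleteSpace H]
    [NormedAddCommGroup E] [NormedSpace ℝ E] [CompleteSpace E]
    (T : ℝ) (hT : 0 < T)
    (G : H →L[ℝ] E) (hG : IsCompactOperator G)
    (f : ℕ → ℝ → H) (φ : ℝ → H)
    (hf : ∀ n, MemLp (f n) 2 (volume.restrict (Set.Ioc 0 T)))
    (hφ : MemLp φ 2 (volume.restrict (Set.Ioc 0 T)))
    (M : ℝ)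
    (hbound : ∀ n, (∫ t in Set.Ioc 0 T, ‖f n t‖ ^ 2) ≤ M)
    (hweak : ∀ ψ : ℝ → H, MemLp ψ 2 (volume.restrict (Set.Ioc 0 T)) →
      Filter.Tendsto (fun n => ∫ t in Set.Ioc 0 T, (inner ℝ (f n t) (ψ t) : ℝ))
        Filter.atTop (nhds (∫ t in Set.Ioc 0 T, (inner ℝ (φ t) (ψ t) : ℝ)))) :
    TendstoUniformlyOn
      (fun n t => ∫ s in Set.Ioc (0 : ℝ) t, G (f n s))
      (fun t => ∫ s in Set.Ioc (0 : ℝ) t, G (φ s))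
      Filter.atTop (Set.Icc 0 T) := by
  haveI hfinT : IsFiniteMeasure (volume.restrict (Set.Ioc (0:ℝ) T)) :=
    ⟨by rw [Measure.restrict_apply_univ, Real.volume_Ioc]; exact ENNReal.ofReal_lt_top⟩
  have hM0 : 0 ≤ M :=
    le_trans (integral_nonneg fun t => by positivity) (hbound 0)
  set Mφ : ℝ := ∫ t in Set.Ioc 0 T, ‖φ t‖ ^ 2 with hMφdef
  have hMφ0 : 0 ≤ Mφ := integral_nonneg fun t => by positivity
  have hintf : ∀ n, IntegrableOn (f n) (Set.Ioc 0 T) volume :=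
    fun n => (hf n).integrable one_le_two
  have hintφ : IntegrableOn φ (Set.Ioc 0 T) volume := hφ.integrable one_le_two
  -- pointwise convergence
  have hpt : ∀ t ∈ Set.Icc (0:ℝ) T,
      Filter.Tendsto (fun n => ∫ s in Set.Ioc (0:ℝ) t, G (f n s)) Filter.atTop
        (nhds (∫ s in Set.Ioc (0:ℝ) t, G (φ s))) := by
    rintro t ⟨ht0, htT⟩
    have hsub : Set.Ioc (0:ℝ) t ⊆ Set.Ioc 0 T := Set.Ioc_subset_Ioc le_rfl htT
    have hif : ∀ n, IntegrableOn (f n) (Set.Ioc (0:ℝ) t) volume :=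
      fun n => (hintf n).mono_set hsub
    have hiφ : IntegrableOn φ (Set.Ioc (0:ℝ) t) volume := hintφ.mono_set hsub
    -- the key: weak convergence of the vector-valued integrals + compactness
    have heq : ∀ (g : ℝ → H) (h : H), IntegrableOn g (Set.Ioc (0:ℝ) t) volume →
        (∫ s in Set.Ioc (0:ℝ) T,
            (inner ℝ (g s) (Set.indicator (Set.Ioc (0:ℝ) t) (fun _ => h) s) : ℝ))
          = (inner ℝ (∫ s in Set.Ioc (0:ℝ) t, g s) h : ℝ) := by
      intro g h hg
      have h1 : (fun s => (inner ℝ (g s) (Set.indicator (Set.Ioc (0:ℝ) t) (fun _ => h) s) : ℝ))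
          = Set.indicator (Set.Ioc (0:ℝ) t) (fun s => (inner ℝ (g s) h : ℝ)) := by
        funext s
        by_cases hs : s ∈ Set.Ioc (0:ℝ) t <;> simp [hs]
      rw [h1, integral_indicator measurableSet_Ioc,
        Measure.restrict_restrict measurableSet_Ioc, Set.Ioc_inter_Ioc, max_self,
        min_eq_left htT]
      calc (∫ s in Set.Ioc (0:ℝ) t, (inner ℝ (g s) h : ℝ))
          = ∫ s in Set.Ioc (0:ℝ) t, (InnerProductSpace.toDual ℝ H h) (g s) := by
            refine integral_congr_ae (Filter.Eventually.of_forall fun s => ?_)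
            simp [InnerProductSpace.toDual_apply_apply, real_inner_comm]
        _ = (InnerProductSpace.toDual ℝ H h) (∫ s in Set.Ioc (0:ℝ) t, g s) :=
            ContinuousLinearMap.integral_comp_comm _ hg
        _ = (inner ℝ (∫ s in Set.Ioc (0:ℝ) t, g s) h : ℝ) := by
            simp [InnerProductSpace.toDual_apply_apply, real_inner_comm]
    have key : Filter.Tendsto (fun n => G (∫ s in Set.Ioc (0:ℝ) t, f n s)) Filter.atTop
        (nhds (G (∫ s in Set.Ioc (0:ℝ) t, φ s))) := by
      refine stmt9_aux_compact G hG _ _ (Real.sqrt T * Real.sqrt M) (fun n => ?_) (fun h => ?_)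
      · calc ‖∫ s in Set.Ioc (0:ℝ) t, f n s‖
            ≤ ∫ s in Set.Ioc (0:ℝ) t, ‖f n s‖ := norm_integral_le_integral_norm _
          _ ≤ Real.sqrt (t - 0) * Real.sqrt M :=
              stmt9_aux_l1 T (f n) M (hf n) (hbound n) le_rfl ht0 htT
          _ ≤ Real.sqrt T * Real.sqrt M :=
              mul_le_mul_of_nonneg_right (Real.sqrt_le_sqrt (by linarith))
                (Real.sqrt_nonneg _)
      · have hψ : MemLp (Set.indicator (Set.Ioc (0:ℝ) t) (fun _ => h)) 2
            (volume.restrict (Set.Ioc 0 T)) := (memLp_const h).indicator measurableSet_Ioc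
        have h2 := hweak _ hψ
        rw [show (fun n => ∫ s in Set.Ioc (0:ℝ) T,
              (inner ℝ (f n s) (Set.indicator (Set.Ioc (0:ℝ) t) (fun _ => h) s) : ℝ))
            = fun n => (inner ℝ (∫ s in Set.Ioc (0:ℝ) t, f n s) h : ℝ)
            from funext fun n => heq (f n) h (hif n), heq φ h hiφ] at h2
        exact h2
    have e1 : ∀ n, (∫ s in Set.Ioc (0:ℝ) t, G (f n s))
        = G (∫ s in Set.Ioc (0:ℝ) t, f n s) :=
      fun n => ContinuousLinearMap.integral_comp_comm G (hif n)
    have e2 : (∫ s in Set.Ioc (0:ℝ) t, G (φ s)) = G (∫ s in Set.Ioc (0:ℝ) t, φ s) :=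
      ContinuousLinearMap.integral_comp_comm G hiφ
    rw [e2]
    simpa only [e1] using key
  -- uniform convergence via equicontinuity (finite grid argument)
  rw [Metric.tendstoUniformlyOn_iff]
  intro ε hε
  set C : ℝ := ‖G‖ * Real.sqrt M + ‖G‖ * Real.sqrt Mφ with hCdef
  have hC0 : 0 ≤ C := by positivity
  set δ : ℝ := (ε / (2 * (C + 1))) ^ 2 with hδdef
  have hδ0 : 0 < δ := by positivity
  have hsqrtδ : Real.sqrt δ = ε / (2 * (C + 1)) := Real.sqrt_sq (by positivity)
  set k : ℕ := ⌈T / δ⌉₊ with hk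
  have hev : ∀ᶠ n in Filter.atTop, ∀ i ∈ Finset.range (k + 1), (i : ℝ) * δ ≤ T →
      dist (∫ s in Set.Ioc (0:ℝ) ((i:ℝ) * δ), G (φ s))
        (∫ s in Set.Ioc (0:ℝ) ((i:ℝ) * δ), G (f n s)) < ε / 2 := by
    rw [Filter.eventually_all_finset]
    intro i _
    by_cases hi : (i : ℝ) * δ ≤ T
    · have hmemi : (i:ℝ) * δ ∈ Set.Icc (0:ℝ) T := ⟨by positivity, hi⟩
      have h4 := Metric.tendsto_nhds.mp (hpt _ hmemi) (ε / 2) (by positivity)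
      filter_upwards [h4] with n hn _
      rw [dist_comm]
      exact hn
    · exact Filter.Eventually.of_forall fun n h => absurd h hi
  filter_upwards [hev] with n hn t ht
  obtain ⟨ht0, htT⟩ := ht
  set i : ℕ := ⌊t / δ⌋₊ with hidef
  set p : ℝ := (i : ℝ) * δ with hpdef
  have hp0 : 0 ≤ p := by positivity
  have hple : p ≤ t := by
    rw [hpdef]
    calc (i : ℝ) * δ ≤ (t / δ) * δ := by
          gcongr
          exact Nat.floor_le (div_nonneg ht0 hδ0.le)
      _ = t := div_mul_cancel₀ t hδ0.ne'
  have htp : t - p < δ := by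
    have h5 : t / δ < (i : ℝ) + 1 := Nat.lt_floor_add_one (t / δ)
    have h6 : t < ((i : ℝ) + 1) * δ := (div_lt_iff₀ hδ0).mp h5
    nlinarith
  have hik : i ∈ Finset.range (k + 1) := by
    rw [Finset.mem_range, Nat.lt_succ_iff, hidef, hk]
    exact le_trans (Nat.floor_le_floor (by gcongr)) (Nat.floor_le_ceil _)
  have hdist := hn i hik (le_trans hple htT)
  -- split the integrals
  have hsplit : ∀ (g : ℝ → H), IntegrableOn g (Set.Ioc 0 T) volume →
      (∫ s in Set.Ioc (0:ℝ) t, G (g s))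
        = (∫ s in Set.Ioc (0:ℝ) p, G (g s)) + ∫ s in Set.Ioc p t, G (g s) := by
    intro g hg
    have hi1 : IntegrableOn (fun s => G (g s)) (Set.Ioc (0:ℝ) p) volume :=
      G.integrable_comp (hg.mono_set (Set.Ioc_subset_Ioc le_rfl (le_trans hple htT)))
    have hi2 : IntegrableOn (fun s => G (g s)) (Set.Ioc p t) volume :=
      G.integrable_comp (hg.mono_set (Set.Ioc_subset_Ioc hp0 htT))
    rw [← setIntegral_union (Set.Ioc_disjoint_Ioc_of_le le_rfl) measurableSet_Ioc hi1 hi2,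
      Set.Ioc_union_Ioc_eq_Ioc hp0 hple]
  have hb1 : dist (∫ s in Set.Ioc (0:ℝ) t, G (φ s)) (∫ s in Set.Ioc (0:ℝ) p, G (φ s))
      ≤ ‖G‖ * (Real.sqrt δ * Real.sqrt Mφ) := by
    rw [dist_eq_norm, hsplit φ hintφ, add_sub_cancel_left]
    calc ‖∫ s in Set.Ioc p t, G (φ s)‖
        ≤ ‖G‖ * (Real.sqrt (t - p) * Real.sqrt Mφ) :=
          stmt9_aux_bound G T φ Mφ hφ le_rfl hp0 hple htT
      _ ≤ ‖G‖ * (Real.sqrt δ * Real.sqrt Mφ) :=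
          mul_le_mul_of_nonneg_left (mul_le_mul_of_nonneg_right
            (Real.sqrt_le_sqrt htp.le) (Real.sqrt_nonneg _)) (norm_nonneg _)
  have hb2 : dist (∫ s in Set.Ioc (0:ℝ) p, G (f n s)) (∫ s in Set.Ioc (0:ℝ) t, G (f n s))
      ≤ ‖G‖ * (Real.sqrt δ * Real.sqrt M) := by
    rw [dist_eq_norm, hsplit (f n) (hintf n)]
    have : (∫ s in Set.Ioc (0:ℝ) p, G (f n s))
        - ((∫ s in Set.Ioc (0:ℝ) p, G (f n s)) + ∫ s in Set.Ioc p t, G (f n s))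
        = -(∫ s in Set.Ioc p t, G (f n s)) := by abel
    rw [this, norm_neg]
    calc ‖∫ s in Set.Ioc p t, G (f n s)‖
        ≤ ‖G‖ * (Real.sqrt (t - p) * Real.sqrt M) :=
          stmt9_aux_bound G T (f n) M (hf n) (hbound n) hp0 hple htT
      _ ≤ ‖G‖ * (Real.sqrt δ * Real.sqrt M) :=
          mul_le_mul_of_nonneg_left (mul_le_mul_of_nonneg_right
            (Real.sqrt_le_sqrt htp.le) (Real.sqrt_nonneg _)) (norm_nonneg _)
  have htri := dist_triangle4 (∫ s in Set.Ioc (0:ℝ) t, G (φ s))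
    (∫ s in Set.Ioc (0:ℝ) p, G (φ s)) (∫ s in Set.Ioc (0:ℝ) p, G (f n s))
    (∫ s in Set.Ioc (0:ℝ) t, G (f n s))
  have hCsum : ‖G‖ * (Real.sqrt δ * Real.sqrt Mφ) + ‖G‖ * (Real.sqrt δ * Real.sqrt M)
      = C * Real.sqrt δ := by rw [hCdef]; ring
  have hfinal : C * Real.sqrt δ < ε / 2 := by
    rw [hsqrtδ]
    have hC1 : C + 1 ≠ 0 := by positivity
    have hrw : C * (ε / (2 * (C + 1))) = (C / (C + 1)) * (ε / 2) := by
      rw [div_mul_div_comm, ← mul_div_assoc]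
      ring_nf
    rw [hrw]
    exact mul_lt_of_lt_one_left (by positivity)
      ((div_lt_one (by positivity)).mpr (by linarith))
  calc dist (∫ s in Set.Ioc (0:ℝ) t, G (φ s)) (∫ s in Set.Ioc (0:ℝ) t, G (f n s))
      ≤ dist (∫ s in Set.Ioc (0:ℝ) t, G (φ s)) (∫ s in Set.Ioc (0:ℝ) p, G (φ s))
        + dist (∫ s in Set.Ioc (0:ℝ) p, G (φ s)) (∫ s in Set.Ioc (0:ℝ) p, G (f n s))
        + dist (∫ s in Set.Ioc (0:ℝ) p, G (f n s)) (∫ s in Set.Ioc (0:ℝ) t, G (f n s)) := htri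
    _ < ‖G‖ * (Real.sqrt δ * Real.sqrt Mφ) + ε / 2 + ‖G‖ * (Real.sqrt δ * Real.sqrt M) := by
        have := hb1
        have := hb2
        have := hdist
        linarith
    _ = C * Real.sqrt δ + ε / 2 := by rw [← hCsum]; ring
    _ < ε / 2 + ε / 2 := by linarith
    _ = ε := by ring
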